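/- If f : ℍ → ℍ is H-differentiable at z⁰ ∈ ℍ with H-derivative d₁ and φ : ℍ → ℍ is H-differentiable at z⁰ with H-derivative d₂, then the pointwise product z ↦ f(z) · φ(z) is H-differentiable at z⁰ with H-derivative d₁ · φ(z⁰) + f(z⁰) · d₂. -/

import Mathlib

open scoped Quaternion
open Filter Topology

/-- A function `f : ℍ → ℍ` is H-differentiable at `z₀` with H-derivative `d` if there exist
sequences of quaternions `A, B` with `∑ ‖A k‖ * ‖B k‖ < ∞` such that
`f (z₀ + h) - f z₀ = ∑' k, A k * h * B k + ω h` with `‖ω h‖ / ‖h‖ → 0` as `h → 0`,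
and `d = ∑' k, A k * B k`. -/
def HDiffAt (f : ℍ[ℝ] → ℍ[ℝ]) (z₀ d : ℍ[ℝ]) : Prop :=
  ∃ A B : ℕ → ℍ[ℝ],
    (Summable fun k => ‖A k‖ * ‖B k‖) ∧
    Filter.Tendsto
      (fun h : ℍ[ℝ] => ‖f (z₀ + h) - f z₀ - ∑' k, A k * h * B k‖ / ‖h‖)
      (𝓝[≠] (0 : ℍ[ℝ])) (𝓝 0) ∧
    d = ∑' k, A k * B k

private lemma summable_ahb (A B : ℕ → ℍ[ℝ]) (hS : Summable fun k => ‖A k‖ * ‖B k‖)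
    (h : ℍ[ℝ]) : Summable fun k => A k * h * B k := by
  apply Summable.of_norm
  have e : (fun k => ‖A k * h * B k‖) = fun k => ‖A k‖ * ‖B k‖ * ‖h‖ := by
    funext k; rw [norm_mul, norm_mul]; ring
  rw [e]; exact hS.mul_right _

private lemma norm_tsum_ahb (A B : ℕ → ℍ[ℝ]) (hS : Summable fun k => ‖A k‖ * ‖B k‖)
    (h : ℍ[ℝ]) : ‖∑' k, A k * h * B k‖ ≤ (∑' k, ‖A k‖ * ‖B k‖) * ‖h‖ := by
  have e : (fun k => ‖A k * h * B k‖) = fun k => ‖A k‖ * ‖B k‖ * ‖h‖ := by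
    funext k; rw [norm_mul, norm_mul]; ring
  calc ‖∑' k, A k * h * B k‖ ≤ ∑' k, ‖A k * h * B k‖ :=
        norm_tsum_le_tsum_norm (by rw [e]; exact hS.mul_right _)
    _ = (∑' k, ‖A k‖ * ‖B k‖) * ‖h‖ := by rw [e, tsum_mul_right]

set_option maxHeartbeats 2000000 in
/-- Product rule for H-derivatives. -/
theorem hDiffAt_mul (f φ : ℍ[ℝ] → ℍ[ℝ]) (z₀ d₁ d₂ : ℍ[ℝ])
    (hf : HDiffAt f z₀ d₁) (hφ : HDiffAt φ z₀ d₂) :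
    HDiffAt (fun z => f z * φ z) z₀ (d₁ * φ z₀ + f z₀ * d₂) := by
  obtain ⟨A₁, B₁, hS₁, hT₁, hd₁⟩ := hf
  obtain ⟨A₂, B₂, hS₂, hT₂, hd₂⟩ := hφ
  set A : ℕ → ℍ[ℝ] := fun n => if Even n then A₁ (n / 2) else f z₀ * A₂ (n / 2) with hA_def
  set B : ℕ → ℍ[ℝ] := fun n => if Even n then B₁ (n / 2) * φ z₀ else B₂ (n / 2) with hB_def
  have hAe : ∀ k, A (2 * k) = A₁ k := by
    intro k
    simp only [hA_def, if_pos (even_two_mul k)]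
    congr 1; omega
  have hAo : ∀ k, A (2 * k + 1) = f z₀ * A₂ k := by
    intro k
    have hne : ¬ Even (2 * k + 1) := by rintro ⟨m, hm⟩; omega
    simp only [hA_def, if_neg hne]
    congr 2; omega
  have hBe : ∀ k, B (2 * k) = B₁ k * φ z₀ := by
    intro k
    simp only [hB_def, if_pos (even_two_mul k)]
    congr 2; omega
  have hBo : ∀ k, B (2 * k + 1) = B₂ k := by
    intro k
    have hne : ¬ Even (2 * k + 1) := by rintro ⟨m, hm⟩; omega
    simp only [hB_def, if_neg hne]
    congr 1; omega
  -- Summability of norms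
  have hSe : Summable fun k => ‖A (2 * k)‖ * ‖B (2 * k)‖ := by
    refine (hS₁.mul_right ‖φ z₀‖).congr fun k => ?_
    rw [hAe, hBe, norm_mul]; ring
  have hSo : Summable fun k => ‖A (2 * k + 1)‖ * ‖B (2 * k + 1)‖ := by
    refine (hS₂.mul_left ‖f z₀‖).congr fun k => ?_
    rw [hAo, hBo, norm_mul]; ring
  have hS : Summable fun n => ‖A n‖ * ‖B n‖ := by
    apply HasSum.summable
      (a := (∑' k, ‖A (2*k)‖ * ‖B (2*k)‖) + ∑' k, ‖A (2*k+1)‖ * ‖B (2*k+1)‖)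
    refine HasSum.even_add_odd ?_ ?_
    exacts [hSe.hasSum, hSo.hasSum]
  refine ⟨A, B, hS, ?_, ?_⟩
  · -- the tendsto goal
    -- key: splitting of the interleaved tsum
    have hsum_h : ∀ h : ℍ[ℝ], ∑' n, A n * h * B n =
        (∑' k, A₁ k * h * B₁ k) * φ z₀ + f z₀ * (∑' k, A₂ k * h * B₂ k) := by
      intro h
      have he : HasSum (fun k => A (2 * k) * h * B (2 * k))
          ((∑' k, A₁ k * h * B₁ k) * φ z₀) := by
        refine ((summable_ahb A₁ B₁ hS₁ h).hasSum.mul_right (φ z₀)).congr_fun fun k => ?_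
        rw [hAe, hBe]; simp [mul_assoc]
      have ho : HasSum (fun k => A (2 * k + 1) * h * B (2 * k + 1))
          (f z₀ * (∑' k, A₂ k * h * B₂ k)) := by
        refine ((summable_ahb A₂ B₂ hS₂ h).hasSum.mul_left (f z₀)).congr_fun fun k => ?_
        rw [hAo, hBo]; simp [mul_assoc]
      have hcomb : HasSum (fun n => A n * h * B n)
          ((∑' k, A₁ k * h * B₁ k) * φ z₀ + f z₀ * (∑' k, A₂ k * h * B₂ k)) := by
        refine HasSum.even_add_odd ?_ ?_
        exacts [he, ho]
      exact hcomb.tsum_eq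
    have hC₁ : ∀ k : ℕ, (0:ℝ) ≤ ‖A₁ k‖ * ‖B₁ k‖ := fun k => by positivity
    set C₁ : ℝ := ∑' k, ‖A₁ k‖ * ‖B₁ k‖ with hC₁def
    set C₂ : ℝ := ∑' k, ‖A₂ k‖ * ‖B₂ k‖ with hC₂def
    -- norm of h tends to 0
    have hnh : Tendsto (fun h : ℍ[ℝ] => ‖h‖) (𝓝[≠] (0:ℍ[ℝ])) (𝓝 0) := by
      have := (continuous_norm (E := ℍ[ℝ])).tendsto (0:ℍ[ℝ])
      rw [norm_zero] at this
      exact this.mono_left nhdsWithin_le_nhds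
    -- Δφ := φ(z₀+h) - φ z₀ tends to 0 in norm
    have hΔφ : Tendsto (fun h : ℍ[ℝ] => ‖φ (z₀ + h) - φ z₀‖) (𝓝[≠] (0:ℍ[ℝ])) (𝓝 0) := by
      apply squeeze_zero' (Eventually.of_forall fun h => norm_nonneg _)
        (g := fun h => ‖φ (z₀ + h) - φ z₀ - ∑' k, A₂ k * h * B₂ k‖ / ‖h‖ * ‖h‖ + C₂ * ‖h‖)
      · filter_upwards [self_mem_nhdsWithin] with h hh
        have hh0 : h ≠ 0 := hh
        have hpos : (0:ℝ) < ‖h‖ := norm_pos_iff.mpr hh0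
        calc ‖φ (z₀ + h) - φ z₀‖
            ≤ ‖φ (z₀ + h) - φ z₀ - ∑' k, A₂ k * h * B₂ k‖ + ‖∑' k, A₂ k * h * B₂ k‖ := by
              simpa using norm_add_le (φ (z₀ + h) - φ z₀ - ∑' k, A₂ k * h * B₂ k)
                (∑' k, A₂ k * h * B₂ k)
          _ ≤ ‖φ (z₀ + h) - φ z₀ - ∑' k, A₂ k * h * B₂ k‖ / ‖h‖ * ‖h‖ + C₂ * ‖h‖ := by
              rw [div_mul_cancel₀ _ hpos.ne']
              exact add_le_add_right (norm_tsum_ahb A₂ B₂ hS₂ h) _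
      · have := (hT₂.mul hnh).add (tendsto_const_nhds (x := C₂).mul hnh)
        simpa using this
    -- φ(z₀+h) tends to φ z₀ in norm
    have hφn : Tendsto (fun h : ℍ[ℝ] => ‖φ (z₀ + h)‖) (𝓝[≠] (0:ℍ[ℝ])) (𝓝 ‖φ z₀‖) := by
      have h1 : Tendsto (fun h : ℍ[ℝ] => φ (z₀ + h) - φ z₀) (𝓝[≠] (0:ℍ[ℝ])) (𝓝 0) :=
        tendsto_zero_iff_norm_tendsto_zero.mpr hΔφ
      have h2 : Tendsto (fun h : ℍ[ℝ] => φ (z₀ + h)) (𝓝[≠] (0:ℍ[ℝ])) (𝓝 (φ z₀)) := by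
        have := h1.add (tendsto_const_nhds (x := φ z₀))
        simpa using this
      exact (continuous_norm.tendsto _).comp h2
    -- main squeeze
    apply squeeze_zero' (Eventually.of_forall fun h => by positivity)
      (g := fun h => ‖f (z₀ + h) - f z₀ - ∑' k, A₁ k * h * B₁ k‖ / ‖h‖ * ‖φ (z₀ + h)‖
        + C₁ * ‖φ (z₀ + h) - φ z₀‖
        + ‖f z₀‖ * (‖φ (z₀ + h) - φ z₀ - ∑' k, A₂ k * h * B₂ k‖ / ‖h‖))
    · filter_upwards [self_mem_nhdsWithin] with h hh
      have hh0 : h ≠ 0 := hh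
      have hpos : (0:ℝ) < ‖h‖ := norm_pos_iff.mpr hh0
      have key : (fun z => f z * φ z) (z₀ + h) - (fun z => f z * φ z) z₀ - ∑' n, A n * h * B n
          = (f (z₀ + h) - f z₀ - ∑' k, A₁ k * h * B₁ k) * φ (z₀ + h)
            + (∑' k, A₁ k * h * B₁ k) * (φ (z₀ + h) - φ z₀)
            + f z₀ * (φ (z₀ + h) - φ z₀ - ∑' k, A₂ k * h * B₂ k) := by
        simp only [hsum_h h]
        noncomm_ring
      rw [key]
      have step1 : ‖(f (z₀ + h) - f z₀ - ∑' k, A₁ k * h * B₁ k) * φ (z₀ + h)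
            + (∑' k, A₁ k * h * B₁ k) * (φ (z₀ + h) - φ z₀)
            + f z₀ * (φ (z₀ + h) - φ z₀ - ∑' k, A₂ k * h * B₂ k)‖
          ≤ ‖f (z₀ + h) - f z₀ - ∑' k, A₁ k * h * B₁ k‖ * ‖φ (z₀ + h)‖
            + C₁ * ‖h‖ * ‖φ (z₀ + h) - φ z₀‖
            + ‖f z₀‖ * ‖φ (z₀ + h) - φ z₀ - ∑' k, A₂ k * h * B₂ k‖ := by
        refine le_trans (norm_add₃_le) ?_
        gcongr
        · rw [norm_mul]
        · rw [norm_mul]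
          exact mul_le_mul_of_nonneg_right (norm_tsum_ahb A₁ B₁ hS₁ h) (norm_nonneg _)
        · rw [norm_mul]
      rw [div_le_iff₀ hpos]
      refine step1.trans (le_of_eq ?_)
      field_simp
    · have := ((hT₁.mul hφn).add ((tendsto_const_nhds (x := C₁)).mul hΔφ)).add
        ((tendsto_const_nhds (x := ‖f z₀‖)).mul hT₂)
      simpa using this
  · -- the derivative value
    have hsm₁ : Summable fun k => A₁ k * B₁ k := by
      apply Summable.of_norm
      refine hS₁.congr fun k => ?_
      rw [norm_mul]
    have hsm₂ : Summable fun k => A₂ k * B₂ k := by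
      apply Summable.of_norm
      refine hS₂.congr fun k => ?_
      rw [norm_mul]
    have he : HasSum (fun k => A (2 * k) * B (2 * k)) (d₁ * φ z₀) := by
      rw [hd₁]
      refine (hsm₁.hasSum.mul_right (φ z₀)).congr_fun fun k => ?_
      rw [hAe, hBe]; simp [mul_assoc]
    have ho : HasSum (fun k => A (2 * k + 1) * B (2 * k + 1)) (f z₀ * d₂) := by
      rw [hd₂]
      refine (hsm₂.hasSum.mul_left (f z₀)).congr_fun fun k => ?_
      rw [hAo, hBo]; simp [mul_assoc]
    have hcomb : HasSum (fun n => A n * B n) (d₁ * φ z₀ + f z₀ * d₂) := by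
      refine HasSum.even_add_odd ?_ ?_
      exacts [he, ho]
    exact hcomb.tsum_eq.symm
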